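/- Let x be a binary sequence of length n ≥ 1 and let x̌ = x‖x̄ be the concatenation of x with its bitwise complement (of length 2n). Then γ_{x̌} = β_x + (1/2)^{n−1}·γ_x + (1/2)^n·α_x + n·(1/2)^n, where the coefficients of x̌ are computed with respect to its length 2n. -/
import Mathlib


open Finset

/-- The coefficient `α_x`. -/
noncomputable def alphaC {n : ℕ} (x : Fin n → Bool) : ℝ :=
  (∑ i ∈ univ.filter (fun i : Fin n => x i = false),
     ∑ j ∈ univ.filter (fun j : Fin n => x j = false ∧ i < j),
       ((1:ℝ)/2) ^ ((j : ℕ) - (i : ℕ)))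
  + ∑ i ∈ univ.filter (fun i : Fin n => x i = true),
      ∑ j ∈ univ.filter (fun j : Fin n => x j = true ∧ i < j),
        ((1:ℝ)/2) ^ ((j : ℕ) - (i : ℕ))

/-- The coefficient `β_x`. -/
noncomputable def betaC {n : ℕ} (x : Fin n → Bool) : ℝ :=
  (∑ i ∈ univ.filter (fun i : Fin n => x i = false),
     ∑ j ∈ univ.filter (fun j : Fin n => x j = false ∧ i < j),
       ((1:ℝ)/2) ^ (n - ((j : ℕ) - (i : ℕ))))
  + ∑ i ∈ univ.filter (fun i : Fin n => x i = true),
      ∑ j ∈ univ.filter (fun j : Fin n => x j = true ∧ i < j),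
        ((1:ℝ)/2) ^ (n - ((j : ℕ) - (i : ℕ)))

/-- The coefficient `γ_x`. -/
noncomputable def gammaC {n : ℕ} (x : Fin n → Bool) : ℝ :=
  (∑ i ∈ univ.filter (fun i : Fin n => x i = false),
     ∑ j ∈ univ.filter (fun j : Fin n => x j = true ∧ i < j),
       ((1:ℝ)/2) ^ (n - ((j : ℕ) - (i : ℕ))))
  + ∑ i ∈ univ.filter (fun i : Fin n => x i = true),
      ∑ j ∈ univ.filter (fun j : Fin n => x j = false ∧ i < j),
        ((1:ℝ)/2) ^ (n - ((j : ℕ) - (i : ℕ)))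

/-- The coefficient `δ_x`. -/
noncomputable def deltaC {n : ℕ} (x : Fin n → Bool) : ℝ :=
  (∑ i ∈ univ.filter (fun i : Fin n => x i = false),
     ∑ j ∈ univ.filter (fun j : Fin n => x j = true ∧ i < j),
       ((1:ℝ)/2) ^ ((j : ℕ) - (i : ℕ)))
  + ∑ i ∈ univ.filter (fun i : Fin n => x i = true),
      ∑ j ∈ univ.filter (fun j : Fin n => x j = false ∧ i < j),
        ((1:ℝ)/2) ^ ((j : ℕ) - (i : ℕ))

lemma two_sum_eq {m : ℕ} (y : Fin m → Bool) (p q : Bool) (f : Fin m → Fin m → ℝ) :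
    (∑ i ∈ univ.filter (fun i : Fin m => y i = p),
       ∑ j ∈ univ.filter (fun j : Fin m => y j = q ∧ i < j), f i j)
    = ∑ i, ∑ j, if (y i = p ∧ y j = q ∧ i < j) then f i j else 0 := by
  rw [Finset.sum_filter]
  refine Finset.sum_congr rfl fun i _ => ?_
  rw [Finset.sum_filter]
  by_cases h : y i = p
  · simp [h]
  · simp [h]

lemma gammaC_eq {m : ℕ} (y : Fin m → Bool) :
    gammaC y = ∑ i, ∑ j, if (y i ≠ y j ∧ i < j)
      then ((1:ℝ)/2) ^ (m - ((j : ℕ) - (i : ℕ))) else 0 := by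
  unfold gammaC
  rw [two_sum_eq y false true, two_sum_eq y true false, ← Finset.sum_add_distrib]
  refine Finset.sum_congr rfl fun i _ => ?_
  rw [← Finset.sum_add_distrib]
  refine Finset.sum_congr rfl fun j _ => ?_
  rcases hi : y i <;> rcases hj : y j <;> simp [hi, hj]

lemma betaC_eq {m : ℕ} (y : Fin m → Bool) :
    betaC y = ∑ i, ∑ j, if (y i = y j ∧ i < j)
      then ((1:ℝ)/2) ^ (m - ((j : ℕ) - (i : ℕ))) else 0 := by
  unfold betaC
  rw [two_sum_eq y false false, two_sum_eq y true true, ← Finset.sum_add_distrib]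
  refine Finset.sum_congr rfl fun i _ => ?_
  rw [← Finset.sum_add_distrib]
  refine Finset.sum_congr rfl fun j _ => ?_
  rcases hi : y i <;> rcases hj : y j <;> simp [hi, hj]

lemma alphaC_eq {m : ℕ} (y : Fin m → Bool) :
    alphaC y = ∑ i, ∑ j, if (y i = y j ∧ i < j)
      then ((1:ℝ)/2) ^ ((j : ℕ) - (i : ℕ)) else 0 := by
  unfold alphaC
  rw [two_sum_eq y false false, two_sum_eq y true true, ← Finset.sum_add_distrib]
  refine Finset.sum_congr rfl fun i _ => ?_
  rw [← Finset.sum_add_distrib]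
  refine Finset.sum_congr rfl fun j _ => ?_
  rcases hi : y i <;> rcases hj : y j <;> simp [hi, hj]

/-- Lemma 3(f): `γ_{x‖x̄} = β_x + (1/2)^{n-1}·γ_x + (1/2)^n·α_x + n·(1/2)^n`. -/
theorem gamma_append_compl (n : ℕ) (hn : 1 ≤ n) (x : Fin n → Bool) :
    gammaC (Fin.append x (fun i => !(x i))) =
      betaC x + ((1:ℝ)/2) ^ (n - 1) * gammaC x + ((1:ℝ)/2) ^ n * alphaC x
        + (n : ℝ) * ((1:ℝ)/2) ^ n := by
  classical
  rw [gammaC_eq, betaC_eq, gammaC_eq, alphaC_eq]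
  simp only [Fin.sum_univ_add, Fin.append_left, Fin.append_right,
    Fin.coe_castAdd, Fin.coe_natAdd, Fin.lt_def]
  rw [Finset.sum_add_distrib]
  -- the four quadrants
  have hQ11 : (∑ i : Fin n, ∑ j : Fin n,
      if (x i ≠ x j ∧ (i : ℕ) < (j : ℕ))
        then ((1:ℝ)/2) ^ ((n + n) - ((j : ℕ) - (i : ℕ))) else 0)
      = ((1:ℝ)/2) ^ n * ∑ i : Fin n, ∑ j : Fin n,
        if (x i ≠ x j ∧ (i : ℕ) < (j : ℕ))
          then ((1:ℝ)/2) ^ (n - ((j : ℕ) - (i : ℕ))) else 0 := by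
    rw [Finset.mul_sum]
    refine Finset.sum_congr rfl fun i _ => ?_
    rw [Finset.mul_sum]
    refine Finset.sum_congr rfl fun j _ => ?_
    by_cases h : x i ≠ x j ∧ (i : ℕ) < (j : ℕ)
    · rw [if_pos h, if_pos h, ← pow_add]
      congr 1
      have := j.isLt
      omega
    · rw [if_neg h, if_neg h, mul_zero]
  have hQ21 : (∑ i : Fin n, ∑ j : Fin n,
      if ((!x i) ≠ x j ∧ n + (i : ℕ) < (j : ℕ))
        then ((1:ℝ)/2) ^ ((n + n) - ((j : ℕ) - (n + (i : ℕ)))) else 0) = 0 := by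
    refine Finset.sum_eq_zero fun i _ => Finset.sum_eq_zero fun j _ => ?_
    rw [if_neg]
    rintro ⟨-, h⟩
    have := j.isLt
    omega
  have hQ22 : (∑ i : Fin n, ∑ j : Fin n,
      if ((!x i) ≠ !x j ∧ n + (i : ℕ) < n + (j : ℕ))
        then ((1:ℝ)/2) ^ ((n + n) - ((n + (j : ℕ)) - (n + (i : ℕ)))) else 0)
      = ((1:ℝ)/2) ^ n * ∑ i : Fin n, ∑ j : Fin n,
        if (x i ≠ x j ∧ (i : ℕ) < (j : ℕ))
          then ((1:ℝ)/2) ^ (n - ((j : ℕ) - (i : ℕ))) else 0 := by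
    rw [Finset.mul_sum]
    refine Finset.sum_congr rfl fun i _ => ?_
    rw [Finset.mul_sum]
    refine Finset.sum_congr rfl fun j _ => ?_
    by_cases h : x i ≠ x j ∧ (i : ℕ) < (j : ℕ)
    · rw [if_pos, if_pos h, ← pow_add]
      · congr 1
        have := j.isLt
        omega
      · refine ⟨?_, by omega⟩
        simpa using h.1
    · rw [if_neg, if_neg h, mul_zero]
      intro h'
      exact h ⟨by simpa using h'.1, by omega⟩
  have hQ12 : (∑ i : Fin n, ∑ j : Fin n,
      if (x i ≠ !x j ∧ (i : ℕ) < n + (j : ℕ))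
        then ((1:ℝ)/2) ^ ((n + n) - ((n + (j : ℕ)) - (i : ℕ))) else 0)
      = (∑ i : Fin n, ∑ j : Fin n,
          if (x i = x j ∧ (i : ℕ) < (j : ℕ))
            then ((1:ℝ)/2) ^ (n - ((j : ℕ) - (i : ℕ))) else 0)
        + ((1:ℝ)/2) ^ n * (∑ i : Fin n, ∑ j : Fin n,
            if (x i = x j ∧ (i : ℕ) < (j : ℕ))
              then ((1:ℝ)/2) ^ ((j : ℕ) - (i : ℕ)) else 0)
        + (n : ℝ) * ((1:ℝ)/2) ^ n := by
    have key : (∑ i : Fin n, ∑ j : Fin n,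
        if (x i ≠ !x j ∧ (i : ℕ) < n + (j : ℕ))
          then ((1:ℝ)/2) ^ ((n + n) - ((n + (j : ℕ)) - (i : ℕ))) else 0)
        = ∑ i : Fin n, ∑ j : Fin n,
          ((if (x i = x j ∧ (i : ℕ) < (j : ℕ))
              then ((1:ℝ)/2) ^ (n - ((j : ℕ) - (i : ℕ))) else 0)
           + (if (x i = x j ∧ (j : ℕ) < (i : ℕ))
              then ((1:ℝ)/2) ^ n * ((1:ℝ)/2) ^ ((i : ℕ) - (j : ℕ)) else 0)
           + (if (i : ℕ) = (j : ℕ) then ((1:ℝ)/2) ^ n else 0)) := by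
      refine Finset.sum_congr rfl fun i _ => Finset.sum_congr rfl fun j _ => ?_
      have hi := i.isLt
      have hj := j.isLt
      by_cases hxx : x i = x j
      · rw [if_pos ⟨by simp [hxx], by omega⟩]
        rcases lt_trichotomy (i : ℕ) (j : ℕ) with h | h | h
        · rw [if_pos ⟨hxx, h⟩, if_neg (by omega), if_neg (by omega)]
          rw [add_zero, add_zero]
          congr 1
          omega
        · rw [if_neg (by omega), if_neg (by omega), if_pos h]
          rw [zero_add, zero_add]
          congr 1
          omega
        · rw [if_neg (by omega), if_pos ⟨hxx, h⟩, if_neg (by omega)]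
          rw [zero_add, add_zero, ← pow_add]
          congr 1
          omega
      · rw [if_neg (by rintro ⟨h', -⟩; exact hxx (by simpa using h')),
          if_neg (by rintro ⟨h', -⟩; exact hxx h'),
          if_neg (by rintro ⟨h', -⟩; exact hxx h'),
          if_neg (by intro h'; exact hxx (by rw [Fin.val_eq_val] at h'; rw [h']))]
        simp
    rw [key]
    simp only [Finset.sum_add_distrib]
    congr 1
    · congr 1
      -- the `j < i` part equals `(1/2)^n * α`-sum, via swapping the summation order
      rw [Finset.sum_comm, Finset.mul_sum]
      refine Finset.sum_congr rfl fun i _ => ?_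
      rw [Finset.mul_sum]
      refine Finset.sum_congr rfl fun j _ => ?_
      by_cases h : x i = x j ∧ (i : ℕ) < (j : ℕ)
      · rw [if_pos ⟨h.1.symm, h.2⟩, if_pos h]
      · rw [if_neg (by rintro ⟨h1, h2⟩; exact h ⟨h1.symm, h2⟩), if_neg h, mul_zero]
    · -- diagonal part
      have : ∀ i : Fin n, (∑ j : Fin n,
          if (i : ℕ) = (j : ℕ) then ((1:ℝ)/2) ^ n else 0) = ((1:ℝ)/2) ^ n := by
        intro i
        simp [Fin.val_eq_val, Finset.sum_ite_eq]
      simp only [this, Finset.sum_const, Finset.card_univ, Fintype.card_fin,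
        nsmul_eq_mul]
  rw [Finset.sum_add_distrib, hQ11, hQ12, hQ21, hQ22]
  have hpow : ((1:ℝ)/2) ^ (n - 1) = 2 * ((1:ℝ)/2) ^ n := by
    have h2 : ((1:ℝ)/2) ^ n = ((1:ℝ)/2) ^ (n - 1) * ((1:ℝ)/2) := by
      rw [← pow_succ]
      congr 1
      omega
    rw [h2]
    ring
  rw [hpow]
  ring
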